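/- Let p ∈ (1,2) and let f(1),…,f(n) be positive definite matrices in M_m(ℂ), with E(f) = (1/n)∑_{i=1}^n f(i). Then (1/n)∑_{i=1}^n tr(f(i)^p) − tr(E(f)^p) ≤ (1/(2n²)) ∑_{i,j=1}^n tr[(f(i) − f(j))(f(i)^{p−1} − f(j)^{p−1})]. -/

import Mathlib

open Matrix
open scoped ComplexOrder

/-- Matrix power `A^q` (real exponent) via the continuous functional calculus. -/
noncomputable def mpow {m : ℕ} (A : Matrix (Fin m) (Fin m) ℂ) (q : ℝ) :
    Matrix (Fin m) (Fin m) ℂ :=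
  cfc (fun x : ℝ => x ^ q) A

section Helpers

variable {m : ℕ}

private lemma mpow_eq {A : Matrix (Fin m) (Fin m) ℂ} (hA : A.IsHermitian) (q : ℝ) :
    mpow A q = hA.cfc (fun x : ℝ => x ^ q) := hA.cfc_eq _

private lemma cfc_unfold {A : Matrix (Fin m) (Fin m) ℂ} (hA : A.IsHermitian) (g : ℝ → ℝ) :
    hA.cfc g = (Matrix.IsHermitian.eigenvectorUnitary hA : Matrix (Fin m) (Fin m) ℂ) *
      diagonal (fun l => ((g (hA.eigenvalues l) : ℝ) : ℂ)) *
      star (Matrix.IsHermitian.eigenvectorUnitary hA : Matrix (Fin m) (Fin m) ℂ) := rfl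

private lemma spectral {A : Matrix (Fin m) (Fin m) ℂ} (hA : A.IsHermitian) :
    A = (Matrix.IsHermitian.eigenvectorUnitary hA : Matrix (Fin m) (Fin m) ℂ) *
      diagonal (fun l => ((hA.eigenvalues l : ℝ) : ℂ)) *
      star (Matrix.IsHermitian.eigenvectorUnitary hA : Matrix (Fin m) (Fin m) ℂ) :=
  hA.spectral_theorem

private lemma sandwich (U V X : Matrix (Fin m) (Fin m) ℂ) :
    star U * (V * X * star V) * U = star (star V * U) * X * (star V * U) := by
  rw [Matrix.star_mul, star_star]
  simp only [Matrix.mul_assoc]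

private lemma conj_diag_entry (W : Matrix (Fin m) (Fin m) ℂ) (d : Fin m → ℝ) (k : Fin m) :
    ((star W * diagonal (fun l => ((d l : ℝ) : ℂ)) * W) k k) =
      (((∑ l, d l * Complex.normSq (W l k) : ℝ) : ℂ)) := by
  rw [Matrix.mul_assoc, Matrix.mul_apply]
  push_cast
  refine Finset.sum_congr rfl fun a _ => ?_
  rw [Matrix.star_apply, Matrix.diagonal_mul, Complex.star_def]
  rw [show (starRingEnd ℂ) (W a k) * ((d a : ℂ) * W a k)
      = (d a : ℂ) * ((starRingEnd ℂ) (W a k) * W a k) by ring]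
  rw [← Complex.normSq_eq_conj_mul_self]

private lemma unitary_col_normSq {W : Matrix (Fin m) (Fin m) ℂ} (hW : star W * W = 1)
    (k : Fin m) : ∑ l, Complex.normSq (W l k) = 1 := by
  have h := congrArg (fun M : Matrix (Fin m) (Fin m) ℂ => (M k k).re) hW
  simp only [Matrix.mul_apply, Matrix.star_apply, Matrix.one_apply_eq, Complex.one_re] at h
  rw [← h, Complex.re_sum]
  refine Finset.sum_congr rfl fun a _ => ?_
  rw [Complex.star_def, ← Complex.normSq_eq_conj_mul_self, Complex.ofReal_re]

/-- Spectral weights for conjugated entries. -/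
private lemma conj_entry_formula {B U : Matrix (Fin m) (Fin m) ℂ} (hU : star U * U = 1)
    (hB : B.IsHermitian) :
    ∃ t : Fin m → Fin m → ℝ,
      (∀ l k, 0 ≤ t l k) ∧ (∀ k, ∑ l, t l k = 1) ∧
      (∀ (g : ℝ → ℝ) (k : Fin m),
        ((star U * hB.cfc g * U) k k) = (((∑ l, g (hB.eigenvalues l) * t l k : ℝ) : ℂ))) ∧
      (∀ k : Fin m,
        ((star U * B * U) k k) = (((∑ l, hB.eigenvalues l * t l k : ℝ) : ℂ))) := by
  set V : Matrix (Fin m) (Fin m) ℂ :=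
    (Matrix.IsHermitian.eigenvectorUnitary hB : Matrix (Fin m) (Fin m) ℂ) with hVdef
  have hV2 : V * star V = 1 :=
    Matrix.mem_unitaryGroup_iff.mp (Matrix.IsHermitian.eigenvectorUnitary hB).2
  have hW : star (star V * U) * (star V * U) = 1 := by
    rw [Matrix.star_mul, star_star]
    calc star U * V * (star V * U) = star U * (V * star V) * U := by
          simp only [Matrix.mul_assoc]
      _ = 1 := by rw [hV2, Matrix.mul_one, hU]
  refine ⟨fun l k => Complex.normSq ((star V * U) l k), fun l k => Complex.normSq_nonneg _,
    fun k => unitary_col_normSq hW k, fun g k => ?_, fun k => ?_⟩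
  · rw [cfc_unfold hB g, sandwich, conj_diag_entry]
  · conv_lhs => rw [spectral hB]
    rw [sandwich, conj_diag_entry]

private lemma trace_conj {V B : Matrix (Fin m) (Fin m) ℂ} (hV : star V * V = 1) :
    Matrix.trace (V * B * star V) = Matrix.trace B := by
  rw [Matrix.trace_mul_comm, ← Matrix.mul_assoc, hV, Matrix.one_mul]

private lemma trace_diag_mul (d : Fin m → ℂ) (M : Matrix (Fin m) (Fin m) ℂ) :
    Matrix.trace (diagonal d * M) = ∑ k, d k * M k k := by
  simp [Matrix.trace, Matrix.diag, Matrix.diagonal_mul]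

/-- `tr (A * B) = ∑ₖ eₖ ⟨uₖ, B uₖ⟩` in the eigenbasis of Hermitian `A`. -/
private lemma trace_mul_eigen {A : Matrix (Fin m) (Fin m) ℂ} (hA : A.IsHermitian)
    (B : Matrix (Fin m) (Fin m) ℂ) :
    Matrix.trace (A * B) = ∑ k, ((hA.eigenvalues k : ℝ) : ℂ) *
      ((star (Matrix.IsHermitian.eigenvectorUnitary hA : Matrix (Fin m) (Fin m) ℂ) * B *
        (Matrix.IsHermitian.eigenvectorUnitary hA : Matrix (Fin m) (Fin m) ℂ)) k k) := by
  set U : Matrix (Fin m) (Fin m) ℂ :=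
    (Matrix.IsHermitian.eigenvectorUnitary hA : Matrix (Fin m) (Fin m) ℂ) with hUdef
  set d : Fin m → ℂ := fun l => ((hA.eigenvalues l : ℝ) : ℂ) with hddef
  conv_lhs => rw [spectral hA]
  have h1 : U * diagonal d * star U * B
      = U * (diagonal d * (star U * B)) := by
    simp only [Matrix.mul_assoc]
  rw [h1, Matrix.trace_mul_comm, Matrix.mul_assoc, trace_diag_mul]

end Helpers

section Main

variable {m : ℕ}

private lemma posdef_avg {n : ℕ} (hn : 0 < n) (f : Fin n → Matrix (Fin m) (Fin m) ℂ)
    (hf : ∀ i, (f i).PosDef) :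
    ((((1 : ℝ) / (n : ℝ) : ℝ) : ℂ) • ∑ i, f i).PosDef := by
  have hsum : (∑ i, f i).PosDef := by
    have i0 : Fin n := ⟨0, hn⟩
    have h1 : (∑ i ∈ Finset.univ.erase i0, f i).PosSemidef :=
      Finset.sum_induction f _ (fun a b ha hb => ha.add hb) Matrix.PosSemidef.zero
        (fun i _ => (hf i).posSemidef)
    rw [← Finset.add_sum_erase _ f (Finset.mem_univ i0)]
    exact (hf i0).add_posSemidef h1
  have hc : (0 : ℝ) < 1 / (n : ℝ) := by positivity
  refine ⟨?_, fun x hx => ?_⟩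
  · have h := hsum.1
    rw [Matrix.IsHermitian, Matrix.conjTranspose_smul, h]
    congr 1
    simp [Complex.star_def, Complex.conj_ofReal]
  · exact (hsum.smul (a := ((1 / (n : ℝ) : ℝ) : ℂ)) (by exact_mod_cast hc)).2 hx

private lemma avg_rpow_jensen {n : ℕ} (hn : 0 < n) (x : Fin n → ℝ) (hx : ∀ j, 0 ≤ x j)
    {r : ℝ} (hr0 : 0 ≤ r) (hr1 : r ≤ 1) :
    ∑ j, x j ^ r ≤ (n : ℝ) * (((1 : ℝ) / (n : ℝ)) * ∑ j, x j) ^ r := by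
  have hn' : (0 : ℝ) < (n : ℝ) := by exact_mod_cast hn
  have h := (Real.concaveOn_rpow hr0 hr1).le_map_sum
    (w := fun _ : Fin n => 1 / (n : ℝ)) (p := x) (t := Finset.univ)
    (fun i _ => by positivity)
    (by rw [Finset.sum_const, Finset.card_univ, Fintype.card_fin, nsmul_eq_mul]; field_simp)
    (fun i _ => hx i)
  simp only [smul_eq_mul] at h
  rw [show ∑ j, (1 / (n : ℝ)) * x j = (1 / (n : ℝ)) * ∑ j, x j from by rw [Finset.mul_sum]] at h
  have h3 : ∑ j, x j ^ r = (n : ℝ) * ∑ j, (1 / (n : ℝ)) * x j ^ r := by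
    rw [Finset.mul_sum]
    refine Finset.sum_congr rfl fun j _ => by field_simp
  rw [h3]
  exact mul_le_mul_of_nonneg_left h hn'.le

private lemma weights_rpow_jensen (t : Fin m → ℝ) (μ : Fin m → ℝ) (ht0 : ∀ l, 0 ≤ t l)
    (ht1 : ∑ l, t l = 1) (hμ : ∀ l, 0 ≤ μ l) {r : ℝ} (hr0 : 0 ≤ r) (hr1 : r ≤ 1) :
    ∑ l, μ l ^ r * t l ≤ (∑ l, μ l * t l) ^ r := by
  have h := (Real.concaveOn_rpow hr0 hr1).le_map_sum
    (w := t) (p := μ) (t := Finset.univ) (fun l _ => ht0 l) ht1 (fun l _ => hμ l)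
  simp only [smul_eq_mul] at h
  calc ∑ l, μ l ^ r * t l = ∑ l, t l * μ l ^ r := by
        exact Finset.sum_congr rfl fun l _ => mul_comm _ _
    _ ≤ (∑ l, t l * μ l) ^ r := h
    _ = (∑ l, μ l * t l) ^ r := by
        congr 1
        exact Finset.sum_congr rfl fun l _ => mul_comm _ _

private lemma mul_mpow_self {B : Matrix (Fin m) (Fin m) ℂ} (hB : B.PosDef) {p : ℝ}
    (hp : 1 < p) : B * mpow B (p - 1) = mpow B p := by
  have hBH := hB.1
  rw [mpow_eq hBH, mpow_eq hBH, cfc_unfold hBH, cfc_unfold hBH]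
  set V : Matrix (Fin m) (Fin m) ℂ :=
    (Matrix.IsHermitian.eigenvectorUnitary hBH : Matrix (Fin m) (Fin m) ℂ) with hVdef
  rw [show B * (V * diagonal (fun l => ((hBH.eigenvalues l ^ (p - 1) : ℝ) : ℂ)) * star V)
      = (V * diagonal (fun l => ((hBH.eigenvalues l : ℝ) : ℂ)) * star V) *
        (V * diagonal (fun l => ((hBH.eigenvalues l ^ (p - 1) : ℝ) : ℂ)) * star V) from by
    rw [← spectral hBH]]
  have hV : star V * V = 1 :=
    Matrix.mem_unitaryGroup_iff'.mp (Matrix.IsHermitian.eigenvectorUnitary hBH).2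
  have key : ∀ X Y : Matrix (Fin m) (Fin m) ℂ,
      (V * X * star V) * (V * Y * star V) = V * (X * Y) * star V := by
    intro X Y
    calc (V * X * star V) * (V * Y * star V)
        = V * (X * (star V * (V * (Y * star V)))) := by simp only [Matrix.mul_assoc]
      _ = V * (X * (Y * star V)) := by
          rw [show star V * (V * (Y * star V)) = Y * star V from by
            rw [← Matrix.mul_assoc, hV, Matrix.one_mul]]
      _ = V * (X * Y) * star V := by simp only [Matrix.mul_assoc]
  have hd : diagonal (fun l => ((hBH.eigenvalues l : ℝ) : ℂ)) *
      diagonal (fun l => ((hBH.eigenvalues l ^ (p - 1) : ℝ) : ℂ))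
      = diagonal (fun l => ((hBH.eigenvalues l ^ p : ℝ) : ℂ)) := by
    rw [Matrix.diagonal_mul_diagonal]
    refine congrArg diagonal (funext fun l => ?_)
    have hμ : 0 < hBH.eigenvalues l := hB.eigenvalues_pos l
    have h1 : hBH.eigenvalues l * hBH.eigenvalues l ^ (p - 1) = hBH.eigenvalues l ^ p := by
      rw [show p = 1 + (p - 1) from by ring, Real.rpow_add hμ, Real.rpow_one]
      ring_nf
    calc ((hBH.eigenvalues l : ℝ) : ℂ) * ((hBH.eigenvalues l ^ (p - 1) : ℝ) : ℂ)
        = ((hBH.eigenvalues l * hBH.eigenvalues l ^ (p - 1) : ℝ) : ℂ) := by push_cast; ring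
      _ = ((hBH.eigenvalues l ^ p : ℝ) : ℂ) := by rw [h1]
  rw [key, hd]

private lemma trace_mpow_eq {B : Matrix (Fin m) (Fin m) ℂ} (hB : B.IsHermitian) (q : ℝ) :
    Matrix.trace (mpow B q) = ((∑ k, hB.eigenvalues k ^ q : ℝ) : ℂ) := by
  rw [mpow_eq hB, cfc_unfold hB]
  have hV : star (Matrix.IsHermitian.eigenvectorUnitary hB : Matrix (Fin m) (Fin m) ℂ) *
      (Matrix.IsHermitian.eigenvectorUnitary hB : Matrix (Fin m) (Fin m) ℂ) = 1 :=
    Matrix.mem_unitaryGroup_iff'.mp (Matrix.IsHermitian.eigenvectorUnitary hB).2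
  rw [trace_conj hV, Matrix.trace_diagonal]
  push_cast
  rfl

end Main

set_option maxHeartbeats 1000000 in
/-- matrix-valued Beckner inequality for the uniform averaging operator: for
`p ∈ (1,2)` and positive definite `f(1),…,f(n)` with average `E(f)`,
`(1/n)∑ᵢ tr(f(i)^p) − tr(E(f)^p) ≤ (1/(2n²)) ∑_{i,j} tr[(f(i)−f(j))(f(i)^{p−1}−f(j)^{p−1})]`. -/
theorem matrix_beckner_uniform_average {m n : ℕ} (hn : 0 < n)
    (p : ℝ) (hp : p ∈ Set.Ioo (1 : ℝ) 2)
    (f : Fin n → Matrix (Fin m) (Fin m) ℂ) (hf : ∀ i, (f i).PosDef) :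
    (1 / (n : ℝ)) * ∑ i, (Matrix.trace (mpow (f i) p)).re -
        (Matrix.trace (mpow (((1 / (n : ℝ)) : ℂ) • ∑ i, f i) p)).re ≤
      (1 / (2 * (n : ℝ) ^ 2)) * ∑ i, ∑ j,
        (Matrix.trace ((f i - f j) * (mpow (f i) (p - 1) - mpow (f j) (p - 1)))).re := by
  obtain ⟨hp1, hp2⟩ := hp
  have hn' : (0 : ℝ) < (n : ℝ) := by exact_mod_cast hn
  have hr0 : (0 : ℝ) < p - 1 := by linarith
  have hr1 : p - 1 ≤ 1 := by linarith
  have hcast : ((((1 : ℝ) / (n : ℝ) : ℝ)) : ℂ) = ((1 / (n : ℝ)) : ℂ) := by push_cast; ring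
  rw [← hcast]
  set E : Matrix (Fin m) (Fin m) ℂ :=
    ((((1 : ℝ) / (n : ℝ) : ℝ)) : ℂ) • ∑ i, f i with hEdef
  have hE : E.PosDef := posdef_avg hn f hf
  have hEH : E.IsHermitian := hE.1
  set U : Matrix (Fin m) (Fin m) ℂ :=
    (Matrix.IsHermitian.eigenvectorUnitary hEH : Matrix (Fin m) (Fin m) ℂ) with hUdef
  have hU : star U * U = 1 :=
    Matrix.mem_unitaryGroup_iff'.mp (Matrix.IsHermitian.eigenvectorUnitary hEH).2
  -- entrywise Jensen for each f j
  have key1 : ∀ (j : Fin n) (k : Fin m),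
      ((star U * mpow (f j) (p - 1) * U) k k).re
        ≤ (((star U * f j * U) k k).re) ^ (p - 1)
      ∧ 0 ≤ ((star U * f j * U) k k).re := by
    intro j k
    obtain ⟨t, ht0, ht1, htg, htB⟩ := conj_entry_formula hU (hf j).1
    have hμ : ∀ l, 0 < (hf j).1.eigenvalues l := fun l => (hf j).eigenvalues_pos l
    have hx : ((star U * f j * U) k k).re = ∑ l, (hf j).1.eigenvalues l * t l k := by
      rw [htB k, Complex.ofReal_re]
    constructor
    · rw [mpow_eq (hf j).1, htg _ k, Complex.ofReal_re, hx]
      exact weights_rpow_jensen (fun l => t l k) _ (fun l => ht0 l k) (ht1 k)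
        (fun l => (hμ l).le) hr0.le hr1
    · rw [hx]
      exact Finset.sum_nonneg fun l _ => mul_nonneg (hμ l).le (ht0 l k)
  -- eigenvalue identity: e k = (1/n) * ∑ j, x j k
  have hek : ∀ k, hEH.eigenvalues k = (1 / (n : ℝ)) * ∑ j, ((star U * f j * U) k k).re := by
    intro k
    have hlin : star U * E * U
        = ((((1 : ℝ) / (n : ℝ) : ℝ)) : ℂ) • ∑ j, star U * f j * U := by
      rw [hEdef, Matrix.mul_smul, Matrix.smul_mul]
      congr 1
      rw [Finset.mul_sum, Finset.sum_mul]
    have h1 := congrArg (fun M : Matrix (Fin m) (Fin m) ℂ => (M k k).re)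
      (by
        have h0 := hEH.conjStarAlgAut_star_eigenvectorUnitary
        simp only [Unitary.conjStarAlgAut_star_apply, Unitary.coe_star] at h0
        exact h0)
    rw [hlin] at h1
    simp only [Matrix.smul_apply, Matrix.diagonal_apply_eq, Function.comp_apply,
      Matrix.sum_apply] at h1
    rw [smul_eq_mul, Complex.re_ofReal_mul, Complex.re_sum] at h1
    have h3 : ((RCLike.ofReal (hEH.eigenvalues k) : ℂ)).re = hEH.eigenvalues k :=
      Complex.ofReal_re _
    rw [h3] at h1
    exact h1.symm
  have hepos : ∀ k, 0 < hEH.eigenvalues k := fun k => hE.eigenvalues_pos k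
  -- core inequality, per eigenvalue index
  have hcore : ∀ k, ∑ j, ((star U * mpow (f j) (p - 1) * U) k k).re
      ≤ (n : ℝ) * hEH.eigenvalues k ^ (p - 1) := by
    intro k
    calc ∑ j, ((star U * mpow (f j) (p - 1) * U) k k).re
        ≤ ∑ j, (((star U * f j * U) k k).re) ^ (p - 1) :=
          Finset.sum_le_sum fun j _ => (key1 j k).1
      _ ≤ (n : ℝ) * (((1 : ℝ) / (n : ℝ)) * ∑ j, ((star U * f j * U) k k).re) ^ (p - 1) :=
          avg_rpow_jensen hn _ (fun j => (key1 j k).2) hr0.le hr1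
      _ = (n : ℝ) * hEH.eigenvalues k ^ (p - 1) := by rw [← hek k]
  -- trace identities
  have hTE : (Matrix.trace (mpow E p)).re = ∑ k, hEH.eigenvalues k ^ p := by
    rw [trace_mpow_eq hEH, Complex.ofReal_re]
  have htr : ∀ j, (Matrix.trace (E * mpow (f j) (p - 1))).re
      = ∑ k, hEH.eigenvalues k * ((star U * mpow (f j) (p - 1) * U) k k).re := by
    intro j
    rw [trace_mul_eigen hEH, Complex.re_sum]
    exact Finset.sum_congr rfl fun k _ => Complex.re_ofReal_mul _ _
  have hS1 : ∀ j, ∑ i, (Matrix.trace (f i * mpow (f j) (p - 1))).re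
      = (n : ℝ) * (Matrix.trace (E * mpow (f j) (p - 1))).re := by
    intro j
    have h : E * mpow (f j) (p - 1)
        = ((((1 : ℝ) / (n : ℝ) : ℝ)) : ℂ) • ∑ i, f i * mpow (f j) (p - 1) := by
      rw [hEdef, Matrix.smul_mul, Finset.sum_mul]
    rw [h, Matrix.trace_smul, smul_eq_mul, Complex.re_ofReal_mul, Matrix.trace_sum,
      Complex.re_sum]
    field_simp
  have hSbound : ∑ i, ∑ j, (Matrix.trace (f i * mpow (f j) (p - 1))).re
      ≤ (n : ℝ) ^ 2 * ∑ k, hEH.eigenvalues k ^ p := by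
    rw [Finset.sum_comm]
    calc ∑ j, ∑ i, (Matrix.trace (f i * mpow (f j) (p - 1))).re
        = ∑ j, (n : ℝ) * ∑ k, hEH.eigenvalues k *
            ((star U * mpow (f j) (p - 1) * U) k k).re := by
          exact Finset.sum_congr rfl fun j _ => by rw [hS1 j, htr j]
      _ = (n : ℝ) * ∑ k, hEH.eigenvalues k *
            ∑ j, ((star U * mpow (f j) (p - 1) * U) k k).re := by
          rw [← Finset.mul_sum]
          congr 1
          rw [Finset.sum_comm]
          exact Finset.sum_congr rfl fun k _ => by rw [Finset.mul_sum]
      _ ≤ (n : ℝ) * ∑ k, hEH.eigenvalues k * ((n : ℝ) * hEH.eigenvalues k ^ (p - 1)) := by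
          refine mul_le_mul_of_nonneg_left (Finset.sum_le_sum fun k _ => ?_) hn'.le
          exact mul_le_mul_of_nonneg_left (hcore k) (hepos k).le
      _ = (n : ℝ) ^ 2 * ∑ k, hEH.eigenvalues k ^ p := by
          rw [Finset.mul_sum, Finset.mul_sum]
          refine Finset.sum_congr rfl fun k _ => ?_
          have h1 : hEH.eigenvalues k * hEH.eigenvalues k ^ (p - 1)
              = hEH.eigenvalues k ^ p := by
            rw [show p = 1 + (p - 1) from by ring, Real.rpow_add (hepos k), Real.rpow_one]
            ring_nf
          rw [show hEH.eigenvalues k * ((n : ℝ) * hEH.eigenvalues k ^ (p - 1))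
              = (n : ℝ) * (hEH.eigenvalues k * hEH.eigenvalues k ^ (p - 1)) from by ring, h1]
          ring
  -- expansion of the RHS
  have hTi : ∀ i, (Matrix.trace (f i * mpow (f i) (p - 1))).re
      = (Matrix.trace (mpow (f i) p)).re := by
    intro i
    rw [mul_mpow_self (hf i) hp1]
  have hexp : ∑ i, ∑ j,
        (Matrix.trace ((f i - f j) * (mpow (f i) (p - 1) - mpow (f j) (p - 1)))).re
      = 2 * (n : ℝ) * ∑ i, (Matrix.trace (mpow (f i) p)).re
        - 2 * ∑ i, ∑ j, (Matrix.trace (f i * mpow (f j) (p - 1))).re := by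
    have hterm : ∀ i j,
        (Matrix.trace ((f i - f j) * (mpow (f i) (p - 1) - mpow (f j) (p - 1)))).re
        = (Matrix.trace (f i * mpow (f i) (p - 1))).re
          + (Matrix.trace (f j * mpow (f j) (p - 1))).re
          - (Matrix.trace (f i * mpow (f j) (p - 1))).re
          - (Matrix.trace (f j * mpow (f i) (p - 1))).re := by
      intro i j
      have h : (f i - f j) * (mpow (f i) (p - 1) - mpow (f j) (p - 1))
          = f i * mpow (f i) (p - 1) + f j * mpow (f j) (p - 1)
            - f i * mpow (f j) (p - 1) - f j * mpow (f i) (p - 1) := by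
        noncomm_ring
      rw [h, Matrix.trace_sub, Matrix.trace_sub, Matrix.trace_add, Complex.sub_re,
        Complex.sub_re, Complex.add_re]
    have hswap : ∑ i, ∑ j, (Matrix.trace (f j * mpow (f i) (p - 1))).re
        = ∑ i, ∑ j, (Matrix.trace (f i * mpow (f j) (p - 1))).re := Finset.sum_comm
    calc ∑ i, ∑ j,
          (Matrix.trace ((f i - f j) * (mpow (f i) (p - 1) - mpow (f j) (p - 1)))).re
        = ∑ i, ∑ j, ((Matrix.trace (f i * mpow (f i) (p - 1))).re
          + (Matrix.trace (f j * mpow (f j) (p - 1))).re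
          - (Matrix.trace (f i * mpow (f j) (p - 1))).re
          - (Matrix.trace (f j * mpow (f i) (p - 1))).re) :=
          Finset.sum_congr rfl fun i _ => Finset.sum_congr rfl fun j _ => hterm i j
      _ = 2 * (n : ℝ) * ∑ i, (Matrix.trace (mpow (f i) p)).re
          - 2 * ∑ i, ∑ j, (Matrix.trace (f i * mpow (f j) (p - 1))).re := by
          simp only [Finset.sum_sub_distrib, Finset.sum_add_distrib, Finset.sum_const,
            Finset.card_univ, Fintype.card_fin, nsmul_eq_mul]
          rw [hswap]
          have hA : ∑ i, (Matrix.trace (f i * mpow (f i) (p - 1))).re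
              = ∑ i, (Matrix.trace (mpow (f i) p)).re :=
            Finset.sum_congr rfl fun i _ => hTi i
          rw [← Finset.mul_sum, hA]
          ring
  -- final arithmetic
  rw [hexp, hTE]
  have hfin : (1 / (2 * (n : ℝ) ^ 2)) *
      (2 * (n : ℝ) * ∑ i, (Matrix.trace (mpow (f i) p)).re
        - 2 * ∑ i, ∑ j, (Matrix.trace (f i * mpow (f j) (p - 1))).re)
      = (1 / (n : ℝ)) * ∑ i, (Matrix.trace (mpow (f i) p)).re
        - (1 / (n : ℝ) ^ 2) * ∑ i, ∑ j, (Matrix.trace (f i * mpow (f j) (p - 1))).re := by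
    field_simp
  rw [hfin]
  have hlast : (1 / (n : ℝ) ^ 2) * ∑ i, ∑ j, (Matrix.trace (f i * mpow (f j) (p - 1))).re
      ≤ ∑ k, hEH.eigenvalues k ^ p := by
    rw [div_mul_eq_mul_div, one_mul, div_le_iff₀ (by positivity)]
    calc ∑ i, ∑ j, (Matrix.trace (f i * mpow (f j) (p - 1))).re
        ≤ (n : ℝ) ^ 2 * ∑ k, hEH.eigenvalues k ^ p := hSbound
      _ = (∑ k, hEH.eigenvalues k ^ p) * (n : ℝ) ^ 2 := by ring
  linarith
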